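/- arXiv:1912.02151 — 3 statements merged into one kernel-verified Lean document; each statement's English description precedes it below -/
import Mathlib

section
/- (Knight's identity) For any real numbers y, u, h and τ ∈ (0,1), ρ_τ(y − u − h) − ρ_τ(y − u) = −h·(τ − 1{y ≤ u}) + ∫₀ʰ (1{y ≤ u + z} − 1{y ≤ u}) dz, where for h < 0 the integral ∫₀ʰ is interpreted as −∫ₕ⁰. -/
/-- The quantile loss `ρ_τ(t) = (τ − 1{t ≤ 0})·t`. -/
noncomputable def quantileLoss (τ t : ℝ) : ℝ := (τ - if t ≤ 0 then 1 else 0) * t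

open MeasureTheory intervalIntegral Set

lemma step_mono (a : ℝ) : Monotone (fun z : ℝ => if a ≤ z then (1:ℝ) else 0) := by
  intro x y hxy
  dsimp only
  split_ifs with h1 h2 <;> norm_num
  · exact h2 (h1.trans hxy)

lemma step_intIntegrable (a c d : ℝ) :
    IntervalIntegrable (fun z : ℝ => if a ≤ z then (1:ℝ) else 0) volume c d :=
  (step_mono a).intervalIntegrable

lemma base (a c d : ℝ) (hcd : c ≤ d) :
    ∫ z in c..d, (if a ≤ z then (1:ℝ) else 0) = max (d - max c a) 0 := by
  rw [integral_of_le hcd]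
  have h1 : ∫ z in Ioc c d, (if a ≤ z then (1:ℝ) else 0)
      = ∫ z in Ioc c d, (if a < z then (1:ℝ) else 0) := by
    apply MeasureTheory.integral_congr_ae
    have hsub : {z : ℝ | ¬ ((if a ≤ z then (1:ℝ) else 0) = (if a < z then (1:ℝ) else 0))} ⊆ {a} := by
      intro z hz
      simp only [Set.mem_setOf_eq] at hz
      by_contra hne
      rcases lt_trichotomy z a with h | h | h
      · simp [not_le.2 h, not_lt.2 h.le] at hz
      · exact hne h
      · simp [h.le, h] at hz
    have hsing : (volume : Measure ℝ) {a} = 0 := measure_singleton a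
    have := measure_mono_null hsub hsing
    exact (ae_restrict_of_ae (ae_iff.2 this))
  simp only [h1]
  have h2 : ∀ z : ℝ, (if a < z then (1:ℝ) else 0) = Set.indicator (Ioi a) (fun _ => (1:ℝ)) z := by
    intro z; simp [Set.indicator, Set.mem_Ioi]
  simp only [h2]
  rw [setIntegral_indicator measurableSet_Ioi, Set.Ioc_inter_Ioi, setIntegral_const]
  rw [Real.volume_real_Ioc]
  simp [ENNReal.toReal_ofReal', max_comm c a]

lemma key (a h : ℝ) :
    ∫ z in (0:ℝ)..h, (if a ≤ z then (1:ℝ) else 0) = max h a - max 0 a := by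
  rcases le_total 0 h with h0 | h0
  · rw [base a 0 h h0]
    simp only [max_def]
    split_ifs <;> linarith
  · rw [integral_symm, base a h 0 h0]
    simp only [max_def]
    split_ifs <;> linarith

/-- Knight's identity: for any reals `y, u, h` and `τ ∈ (0,1)`,
`ρ_τ(y − u − h) − ρ_τ(y − u) = −h·(τ − 1{y ≤ u}) + ∫₀ʰ (1{y ≤ u + z} − 1{y ≤ u}) dz`,
where for `h < 0` the integral `∫₀ʰ` is interpreted as `−∫ₕ⁰` (the interval integral
convention). -/
theorem knight_identity (τ : ℝ) (hτ0 : 0 < τ) (hτ1 : τ < 1) (y u h : ℝ) :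
    quantileLoss τ (y - u - h) - quantileLoss τ (y - u) =
      -h * (τ - if y ≤ u then 1 else 0) +
        ∫ z in (0:ℝ)..h,
          ((if y ≤ u + z then (1:ℝ) else 0) - (if y ≤ u then (1:ℝ) else 0)) := by

  have hiff : ∀ z : ℝ, (y ≤ u + z) = (y - u ≤ z) := fun z =>
    propext ⟨fun hh => by linarith, fun hh => by linarith⟩
  have hiff0 : (y ≤ u) = (y - u ≤ 0) :=
    propext ⟨fun hh => by linarith, fun hh => by linarith⟩
  simp only [hiff, hiff0]
  have hint : (∫ z in (0:ℝ)..h,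
      ((if y - u ≤ z then (1:ℝ) else 0) - (if y - u ≤ 0 then (1:ℝ) else 0)))
      = (max h (y - u) - max 0 (y - u)) - h * (if y - u ≤ 0 then (1:ℝ) else 0) := by
    rw [intervalIntegral.integral_sub (step_intIntegrable (y - u) 0 h)
      intervalIntegrable_const, key, intervalIntegral.integral_const]
    simp [smul_eq_mul]
  rw [hint]
  simp only [quantileLoss]
  have h1 : (y - u - h ≤ 0) = (y - u ≤ h) :=
    propext ⟨fun hh => by linarith, fun hh => by linarith⟩
  simp only [h1]
  simp only [max_def]
  split_ifs <;> ring_nf <;> nlinarith []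
end

section
/- For every pair of matrices Π̌, Π̃ ∈ ℝ^{n×T}, one has ‖Π̌ − Π̃‖_* + ‖Π̌‖_* − ‖Π̃‖_* ≤ 6·√(rank Π̌)·‖Π̌ − Π̃‖_F. -/
open scoped BigOperators

/-- Frobenius norm of a real matrix. -/
noncomputable def frobeniusNorm {n T : ℕ} (A : Matrix (Fin n) (Fin T) ℝ) : ℝ :=
  Real.sqrt (∑ i, ∑ t, (A i t) ^ 2)

/-- Singular values of a real `n × T` matrix, as the square roots of the
eigenvalues of `Aᵀ A` (indexed by `Fin T`). -/
noncomputable def singularValues {n T : ℕ} (A : Matrix (Fin n) (Fin T) ℝ) :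
    Fin T → ℝ :=
  fun j => Real.sqrt ((show (Matrix.transpose A * A).IsHermitian by
    simpa using Matrix.isHermitian_conjTranspose_mul_self A).eigenvalues j)

/-- Nuclear norm: sum of the singular values. -/
noncomputable def nuclearNorm {n T : ℕ} (A : Matrix (Fin n) (Fin T) ℝ) : ℝ :=
  ∑ j, singularValues A j

open Matrix

namespace NucAux

variable {a b : ℕ}

lemma hermT (A : Matrix (Fin a) (Fin b) ℝ) : (Matrix.transpose A * A).IsHermitian := by
  simpa using Matrix.isHermitian_conjTranspose_mul_self A

noncomputable def ev (A : Matrix (Fin a) (Fin b) ℝ) : Fin b → ℝ :=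
  (hermT A).eigenvalues

noncomputable def V (A : Matrix (Fin a) (Fin b) ℝ) : Matrix (Fin b) (Fin b) ℝ :=
  ((hermT A).eigenvectorUnitary : Matrix (Fin b) (Fin b) ℝ)

lemma ev_nonneg (A : Matrix (Fin a) (Fin b) ℝ) (j : Fin b) : 0 ≤ ev A j :=
  Matrix.eigenvalues_conjTranspose_mul_self_nonneg A j

lemma star_V_mul (A : Matrix (Fin a) (Fin b) ℝ) : (V A)ᴴ * V A = 1 := by
  rw [← Matrix.star_eq_conjTranspose]
  exact Unitary.coe_star_mul_self _

lemma V_mul_star (A : Matrix (Fin a) (Fin b) ℝ) : V A * (V A)ᴴ = 1 := by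
  rw [← Matrix.star_eq_conjTranspose]
  exact Unitary.coe_mul_star_self _

lemma spectral (A : Matrix (Fin a) (Fin b) ℝ) :
    Aᴴ * A = V A * Matrix.diagonal (ev A) * (V A)ᴴ := by
  have h := (hermT A).spectral_theorem
  simpa [V, ev, Matrix.star_eq_conjTranspose, RCLike.ofReal_real_eq_id] using h

/-- conjugation of a diagonal by the eigenvector unitary of `A`. -/
noncomputable def conj (A : Matrix (Fin a) (Fin b) ℝ) (f : Fin b → ℝ) :
    Matrix (Fin b) (Fin b) ℝ :=
  V A * Matrix.diagonal f * (V A)ᴴ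

lemma conj_mul (A : Matrix (Fin a) (Fin b) ℝ) (f g : Fin b → ℝ) :
    conj A f * conj A g = conj A (fun j => f j * g j) := by
  unfold conj
  calc V A * Matrix.diagonal f * (V A)ᴴ * (V A * Matrix.diagonal g * (V A)ᴴ)
      = V A * Matrix.diagonal f * ((V A)ᴴ * V A) * Matrix.diagonal g * (V A)ᴴ := by
        simp only [Matrix.mul_assoc]
    _ = V A * (Matrix.diagonal f * Matrix.diagonal g) * (V A)ᴴ := by
        rw [star_V_mul]; simp only [Matrix.mul_one, Matrix.mul_assoc]
    _ = V A * Matrix.diagonal (fun j => f j * g j) * (V A)ᴴ := by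
        rw [Matrix.diagonal_mul_diagonal]

lemma conj_conjTranspose (A : Matrix (Fin a) (Fin b) ℝ) (f : Fin b → ℝ) :
    (conj A f)ᴴ = conj A f := by
  unfold conj
  simp [Matrix.conjTranspose_mul, Matrix.mul_assoc, Matrix.diagonal_conjTranspose]

lemma trace_conj (A : Matrix (Fin a) (Fin b) ℝ) (f : Fin b → ℝ) :
    Matrix.trace (conj A f) = ∑ j, f j := by
  unfold conj
  rw [Matrix.trace_mul_comm, ← Matrix.mul_assoc, star_V_mul, Matrix.one_mul,
    Matrix.trace_diagonal]

lemma conj_one (A : Matrix (Fin a) (Fin b) ℝ) : conj A (fun _ => 1) = 1 := by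
  unfold conj
  rw [Matrix.diagonal_one, Matrix.mul_one, V_mul_star]

lemma conj_congr (A : Matrix (Fin a) (Fin b) ℝ) {f g : Fin b → ℝ} (h : ∀ j, f j = g j) :
    conj A f = conj A g := by
  unfold conj; congr 1; ext j; simp [funext h]

lemma conj_sub (A : Matrix (Fin a) (Fin b) ℝ) (f g : Fin b → ℝ) :
    conj A f - conj A g = conj A (fun j => f j - g j) := by
  unfold conj
  rw [← Matrix.sub_mul, ← Matrix.mul_sub, ← Matrix.diagonal_sub]

lemma conj_zero (A : Matrix (Fin a) (Fin b) ℝ) : conj A (fun _ => 0) = 0 := by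
  unfold conj; simp [Matrix.diagonal_zero]

lemma gram_eq_conj (A : Matrix (Fin a) (Fin b) ℝ) : Aᴴ * A = conj A (ev A) := spectral A

noncomputable def S (A : Matrix (Fin a) (Fin b) ℝ) : Matrix (Fin b) (Fin b) ℝ :=
  conj A (fun j => if ev A j = 0 then 0 else (Real.sqrt (ev A j))⁻¹)
noncomputable def Q (A : Matrix (Fin a) (Fin b) ℝ) : Matrix (Fin b) (Fin b) ℝ :=
  conj A (fun j => if ev A j = 0 then 0 else 1)
noncomputable def W (A : Matrix (Fin a) (Fin b) ℝ) : Matrix (Fin a) (Fin b) ℝ := A * S A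

lemma sqrt_pos_of_ne {x : ℝ} (hx : 0 ≤ x) (h : x ≠ 0) : 0 < Real.sqrt x :=
  Real.sqrt_pos.2 (lt_of_le_of_ne hx (Ne.symm h))

lemma Q_idem (A : Matrix (Fin a) (Fin b) ℝ) : Q A * Q A = Q A := by
  unfold Q; rw [conj_mul]; apply conj_congr; intro j; by_cases h : ev A j = 0 <;> simp [h]

lemma Q_herm (A : Matrix (Fin a) (Fin b) ℝ) : (Q A)ᴴ = Q A := conj_conjTranspose _ _
lemma S_herm (A : Matrix (Fin a) (Fin b) ℝ) : (S A)ᴴ = S A := conj_conjTranspose _ _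

lemma gram_mul_S_S (A : Matrix (Fin a) (Fin b) ℝ) : Aᴴ * A * S A * S A = Q A := by
  rw [gram_eq_conj]; unfold S Q
  rw [conj_mul, conj_mul]
  apply conj_congr; intro j
  by_cases h : ev A j = 0
  · simp [h]
  · have h2 : Real.sqrt (ev A j) * Real.sqrt (ev A j) = ev A j :=
      Real.mul_self_sqrt (ev_nonneg A j)
    have h1 : Real.sqrt (ev A j) ≠ 0 := ne_of_gt (sqrt_pos_of_ne (ev_nonneg A j) h)
    simp only [h, if_neg, if_false]
    field_simp
    rw [Real.sq_sqrt (ev_nonneg A j)]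

lemma gram_W (A : Matrix (Fin a) (Fin b) ℝ) : (W A)ᴴ * W A = Q A := by
  unfold W
  rw [Matrix.conjTranspose_mul, Matrix.mul_assoc, ← Matrix.mul_assoc (Aᴴ), S_herm,
    ← Matrix.mul_assoc, gram_eq_conj]
  unfold S Q
  rw [conj_mul, conj_mul]
  apply conj_congr; intro j
  by_cases h : ev A j = 0
  · simp [h]
  · have h2 : Real.sqrt (ev A j) * Real.sqrt (ev A j) = ev A j :=
      Real.mul_self_sqrt (ev_nonneg A j)
    have h1 : Real.sqrt (ev A j) ≠ 0 := ne_of_gt (sqrt_pos_of_ne (ev_nonneg A j) h)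
    simp only [h, if_neg, if_false]
    field_simp
    rw [Real.sq_sqrt (ev_nonneg A j)]

lemma mul_Q (A : Matrix (Fin a) (Fin b) ℝ) : A * Q A = A := by
  have key : (A * Q A - A)ᴴ * (A * Q A - A) = 0 := by
    have expand : (A * Q A - A)ᴴ * (A * Q A - A)
        = Q A * (Aᴴ * A) * Q A - Q A * (Aᴴ * A) - ((Aᴴ * A) * Q A - Aᴴ * A) := by
      rw [Matrix.conjTranspose_sub, Matrix.conjTranspose_mul, Q_herm,
        Matrix.sub_mul, Matrix.mul_sub, Matrix.mul_sub]
      simp only [Matrix.mul_assoc]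
    rw [expand, gram_eq_conj]
    unfold Q
    simp only [conj_mul, conj_sub]
    rw [show (0 : Matrix (Fin b) (Fin b) ℝ) = conj A (fun _ => 0) from (conj_zero A).symm]
    apply conj_congr; intro j
    by_cases h : ev A j = 0 <;> simp [h]
  have h0 := Matrix.conjTranspose_mul_self_eq_zero.mp key
  exact sub_eq_zero.mp h0

lemma trace_W_self (A : Matrix (Fin a) (Fin b) ℝ) :
    Matrix.trace (Aᴴ * W A) = ∑ j, Real.sqrt (ev A j) := by
  unfold W
  rw [← Matrix.mul_assoc, gram_eq_conj]
  unfold S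
  rw [conj_mul, trace_conj]
  congr 1; ext j
  by_cases h : ev A j = 0
  · simp [h]
  · have h2 : Real.sqrt (ev A j) * Real.sqrt (ev A j) = ev A j :=
      Real.mul_self_sqrt (ev_nonneg A j)
    have h1 : Real.sqrt (ev A j) ≠ 0 := ne_of_gt (sqrt_pos_of_ne (ev_nonneg A j) h)
    simp only [h, if_neg, if_false]
    field_simp
    rw [Real.sq_sqrt (ev_nonneg A j)]

/-- Cauchy–Schwarz for finite sums. -/
lemma dot_le_sqrt {ι : Type*} [Fintype ι] (p q : ι → ℝ) :
    ∑ i, p i * q i ≤ Real.sqrt (∑ i, p i ^ 2) * Real.sqrt (∑ i, q i ^ 2) := by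
  have h := Finset.sum_mul_sq_le_sq_mul_sq Finset.univ p q
  calc ∑ i, p i * q i ≤ |∑ i, p i * q i| := le_abs_self _
    _ = Real.sqrt ((∑ i, p i * q i) ^ 2) := (Real.sqrt_sq_eq_abs _).symm
    _ ≤ Real.sqrt ((∑ i, p i ^ 2) * ∑ i, q i ^ 2) := Real.sqrt_le_sqrt h
    _ = _ := Real.sqrt_mul (by positivity) _

/-- `B` is a (weak) contraction. -/
def Contr (B : Matrix (Fin a) (Fin b) ℝ) : Prop :=
  ∀ x : Fin b → ℝ, (B *ᵥ x) ⬝ᵥ (B *ᵥ x) ≤ x ⬝ᵥ x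

lemma gram_quad (B : Matrix (Fin a) (Fin b) ℝ) (x : Fin b → ℝ) :
    (B *ᵥ x) ⬝ᵥ (B *ᵥ x) = x ⬝ᵥ ((Bᴴ * B) *ᵥ x) := by
  rw [Matrix.conjTranspose_eq_transpose_of_trivial, ← Matrix.mulVec_mulVec,
    Matrix.dotProduct_mulVec x, Matrix.vecMul_transpose]

lemma contr_of_gram_idem (B : Matrix (Fin a) (Fin b) ℝ)
    (h : (Bᴴ * B) * (Bᴴ * B) = Bᴴ * B) : Contr B := by
  intro x
  have hRherm : (Bᴴ * B)ᴴ = Bᴴ * B := by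
    rw [Matrix.conjTranspose_mul, Matrix.conjTranspose_conjTranspose]
  have e1 : ((Bᴴ * B) *ᵥ x) ⬝ᵥ ((Bᴴ * B) *ᵥ x) = x ⬝ᵥ ((Bᴴ * B) *ᵥ x) := by
    rw [gram_quad (Bᴴ * B) x, hRherm, h]
  have key1 : (B *ᵥ x) ⬝ᵥ (B *ᵥ x) = x ⬝ᵥ ((Bᴴ * B) *ᵥ x) := gram_quad B x
  have hs : (0:ℝ) ≤ ((Bᴴ * B) *ᵥ x) ⬝ᵥ ((Bᴴ * B) *ᵥ x) :=
    Finset.sum_nonneg fun i _ => mul_self_nonneg _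
  have ht : (0:ℝ) ≤ x ⬝ᵥ x := Finset.sum_nonneg fun i _ => mul_self_nonneg _
  have hcs : x ⬝ᵥ ((Bᴴ * B) *ᵥ x)
      ≤ Real.sqrt (x ⬝ᵥ x) * Real.sqrt (((Bᴴ * B) *ᵥ x) ⬝ᵥ ((Bᴴ * B) *ᵥ x)) := by
    have := dot_le_sqrt x ((Bᴴ * B) *ᵥ x)
    simpa [dotProduct, pow_two] using this
  rw [key1]
  rw [← e1] at hcs
  nlinarith [Real.mul_self_sqrt hs, Real.mul_self_sqrt ht, Real.sqrt_nonneg (x ⬝ᵥ x),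
    Real.sqrt_nonneg (((Bᴴ * B) *ᵥ x) ⬝ᵥ ((Bᴴ * B) *ᵥ x)),
    mul_self_nonneg (Real.sqrt (x ⬝ᵥ x) - Real.sqrt (((Bᴴ * B) *ᵥ x) ⬝ᵥ ((Bᴴ * B) *ᵥ x)))]

lemma conj_V_gram (A : Matrix (Fin a) (Fin b) ℝ) :
    (V A)ᴴ * (Aᴴ * A) * V A = Matrix.diagonal (ev A) := by
  rw [spectral]
  calc (V A)ᴴ * (V A * Matrix.diagonal (ev A) * (V A)ᴴ) * V A
      = ((V A)ᴴ * V A) * Matrix.diagonal (ev A) * ((V A)ᴴ * V A) := by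
        simp only [Matrix.mul_assoc]
    _ = Matrix.diagonal (ev A) := by rw [star_V_mul]; simp

lemma trace_le_nuclear (M B : Matrix (Fin a) (Fin b) ℝ) (hB : Contr B) :
    Matrix.trace (Mᴴ * B) ≤ ∑ j, Real.sqrt (ev M j) := by
  have htr : Matrix.trace (Mᴴ * B) = Matrix.trace ((V M)ᴴ * (Mᴴ * B) * V M) := by
    rw [Matrix.trace_mul_comm ((V M)ᴴ * (Mᴴ * B)) (V M), ← Matrix.mul_assoc,
      V_mul_star, Matrix.one_mul]
  have hform : (V M)ᴴ * (Mᴴ * B) * V M = (M * V M)ᴴ * (B * V M) := by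
    rw [Matrix.conjTranspose_mul]
    simp only [Matrix.mul_assoc]
  have hMV : ∀ j, ∑ i, (M * V M) i j ^ 2 = ev M j := by
    intro j
    have h1 : (M * V M)ᴴ * (M * V M) = Matrix.diagonal (ev M) := by
      rw [Matrix.conjTranspose_mul, show (V M)ᴴ * Mᴴ * (M * V M) = (V M)ᴴ * (Mᴴ * M) * V M by
        simp only [Matrix.mul_assoc], conj_V_gram]
    have h2 := congrFun (congrFun h1 j) j
    simp only [Matrix.mul_apply, Matrix.conjTranspose_apply, Matrix.diagonal_apply_eq,
      star_trivial] at h2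
    rw [← h2]
    simp only [Matrix.mul_apply, pow_two]
  have hV1 : ∀ j, ∑ t, (V M) t j ^ 2 = 1 := by
    intro j
    have h2 := congrFun (congrFun (star_V_mul M) j) j
    simp only [Matrix.mul_apply, Matrix.conjTranspose_apply, star_trivial,
      Matrix.one_apply_eq] at h2
    rw [← h2]
    simp only [pow_two]
  have hBV : ∀ j, ∑ i, (B * V M) i j ^ 2 ≤ 1 := by
    intro j
    have hcol : ∀ i, (B * V M) i j = (B *ᵥ fun t => (V M) t j) i := by
      intro i; simp [Matrix.mul_apply, Matrix.mulVec, dotProduct]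
    have := hB (fun t => (V M) t j)
    simp only [dotProduct] at this
    calc ∑ i, (B * V M) i j ^ 2 = ∑ i, (B *ᵥ fun t => (V M) t j) i * (B *ᵥ fun t => (V M) t j) i := by
          simp_rw [hcol, pow_two]
      _ ≤ ∑ t, (V M) t j * (V M) t j := this
      _ = ∑ t, (V M) t j ^ 2 := by simp_rw [pow_two]
      _ = 1 := hV1 j
  rw [htr, hform]
  have hdiag : Matrix.trace ((M * V M)ᴴ * (B * V M))
      = ∑ j, ∑ i, (M * V M) i j * (B * V M) i j := by
    rw [Matrix.trace]
    apply Finset.sum_congr rfl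
    intro j _
    simp [Matrix.diag, Matrix.mul_apply, Matrix.conjTranspose_apply, mul_comm]
  rw [hdiag]
  apply Finset.sum_le_sum
  intro j _
  calc ∑ i, (M * V M) i j * (B * V M) i j
      ≤ Real.sqrt (∑ i, (M * V M) i j ^ 2) * Real.sqrt (∑ i, (B * V M) i j ^ 2) :=
        dot_le_sqrt _ _
    _ ≤ Real.sqrt (ev M j) * 1 := by
        apply mul_le_mul
        · rw [hMV j]
        · calc Real.sqrt (∑ i, (B * V M) i j ^ 2) ≤ Real.sqrt 1 := Real.sqrt_le_sqrt (hBV j)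
            _ = 1 := Real.sqrt_one
        · exact Real.sqrt_nonneg _
        · exact Real.sqrt_nonneg _
    _ = Real.sqrt (ev M j) := mul_one _

/-- abbreviation for the nuclear norm in terms of `ev`. -/
noncomputable def N (A : Matrix (Fin a) (Fin b) ℝ) : ℝ := ∑ j, Real.sqrt (ev A j)

lemma N_nonneg (A : Matrix (Fin a) (Fin b) ℝ) : 0 ≤ N A :=
  Finset.sum_nonneg fun j _ => Real.sqrt_nonneg _

lemma contr_W (A : Matrix (Fin a) (Fin b) ℝ) : Contr (W A) :=
  contr_of_gram_idem _ (by rw [gram_W, Q_idem])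

lemma N_add_le (X Y : Matrix (Fin a) (Fin b) ℝ) : N (X + Y) ≤ N X + N Y := by
  have h : Matrix.trace ((X + Y)ᴴ * W (X + Y)) = N (X + Y) := trace_W_self (X + Y)
  have hsplit : Matrix.trace ((X + Y)ᴴ * W (X + Y))
      = Matrix.trace (Xᴴ * W (X + Y)) + Matrix.trace (Yᴴ * W (X + Y)) := by
    rw [Matrix.conjTranspose_add, Matrix.add_mul, Matrix.trace_add]
  have h1 := trace_le_nuclear X (W (X + Y)) (contr_W _)
  have h2 := trace_le_nuclear Y (W (X + Y)) (contr_W _)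
  rw [← h, hsplit]
  exact add_le_add h1 h2

lemma N_gram_congr (X : Matrix (Fin a) (Fin b) ℝ) {c : ℕ} (Y : Matrix (Fin c) (Fin b) ℝ)
    (h : Xᴴ * X = Yᴴ * Y) : N X = N Y := by
  unfold N ev
  have key : ∀ (M₁ M₂ : Matrix (Fin b) (Fin b) ℝ) (hM₁ : M₁.IsHermitian)
      (hM₂ : M₂.IsHermitian), M₁ = M₂ →
      ∑ j, Real.sqrt (hM₁.eigenvalues j) = ∑ j, Real.sqrt (hM₂.eigenvalues j) := by
    rintro M₁ M₂ hM₁ hM₂ rfl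
    rfl
  exact key _ _ _ _ h

lemma N_neg (X : Matrix (Fin a) (Fin b) ℝ) : N (-X) = N X :=
  N_gram_congr _ _ (by simp)

lemma N_superadd (A C : Matrix (Fin a) (Fin b) ℝ) (h1 : Aᴴ * C = 0) (h2 : C * Aᴴ = 0) :
    N A + N C ≤ N (A + C) := by
  have hCA : Cᴴ * A = 0 := by
    have := congrArg Matrix.conjTranspose h1
    simpa [Matrix.conjTranspose_mul] using this
  have hAWC : Aᴴ * W C = 0 := by
    unfold W; rw [← Matrix.mul_assoc, h1, Matrix.zero_mul]
  have hCWA : Cᴴ * W A = 0 := by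
    unfold W; rw [← Matrix.mul_assoc, hCA, Matrix.zero_mul]
  have hCQA : C * Q A = 0 := by
    rw [← gram_mul_S_S]
    calc C * (Aᴴ * A * S A * S A) = (C * Aᴴ) * (A * S A * S A) := by
          simp only [Matrix.mul_assoc]
      _ = 0 := by rw [h2, Matrix.zero_mul]
  have hQACT : Q A * Cᴴ = 0 := by
    calc Q A * Cᴴ = (Q A)ᴴ * Cᴴ := by rw [Q_herm]
      _ = (C * Q A)ᴴ := (Matrix.conjTranspose_mul C (Q A)).symm
      _ = 0 := by rw [hCQA, Matrix.conjTranspose_zero]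
  have hQAC : Q A * Q C = 0 := by
    rw [← gram_mul_S_S C]
    calc Q A * (Cᴴ * C * S C * S C) = (Q A * Cᴴ) * (C * S C * S C) := by
          simp only [Matrix.mul_assoc]
      _ = 0 := by rw [hQACT, Matrix.zero_mul]
  have hQCA : Q C * Q A = 0 := by
    calc Q C * Q A = (Q C)ᴴ * (Q A)ᴴ := by rw [Q_herm, Q_herm]
      _ = (Q A * Q C)ᴴ := (Matrix.conjTranspose_mul _ _).symm
      _ = 0 := by rw [hQAC, Matrix.conjTranspose_zero]
  have hWAWC : (W A)ᴴ * W C = 0 := by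
    unfold W
    rw [Matrix.conjTranspose_mul, S_herm]
    calc S A * Aᴴ * (C * S C) = S A * (Aᴴ * C) * S C := by simp only [Matrix.mul_assoc]
      _ = 0 := by rw [h1, Matrix.mul_zero, Matrix.zero_mul]
  have hWCWA : (W C)ᴴ * W A = 0 := by
    have := congrArg Matrix.conjTranspose hWAWC
    simpa [Matrix.conjTranspose_mul] using this
  set B := W A + W C with hB
  have hgram : Bᴴ * B = Q A + Q C := by
    rw [hB, Matrix.conjTranspose_add, Matrix.add_mul, Matrix.mul_add, Matrix.mul_add,
      gram_W, gram_W, hWAWC, hWCWA]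
    abel
  have hcontr : Contr B := by
    apply contr_of_gram_idem
    rw [hgram, Matrix.add_mul, Matrix.mul_add, Matrix.mul_add, Q_idem, Q_idem, hQAC, hQCA]
    abel
  have htr : Matrix.trace ((A + C)ᴴ * B) = N A + N C := by
    rw [hB, Matrix.conjTranspose_add, Matrix.add_mul, Matrix.mul_add, Matrix.mul_add,
      Matrix.trace_add, Matrix.trace_add, Matrix.trace_add, hAWC, hCWA]
    simp only [Matrix.trace_zero, add_zero, zero_add]
    rw [trace_W_self, trace_W_self]
    rfl
  have := trace_le_nuclear (A + C) B hcontr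
  rw [htr] at this
  exact this

/-- squared Frobenius norm as a trace -/
noncomputable def fsq (M : Matrix (Fin a) (Fin b) ℝ) : ℝ := Matrix.trace (Mᴴ * M)

lemma fsq_eq_sum_ev (M : Matrix (Fin a) (Fin b) ℝ) : fsq M = ∑ j, ev M j := by
  unfold fsq
  rw [spectral, Matrix.trace_mul_comm, ← Matrix.mul_assoc, star_V_mul, Matrix.one_mul,
    Matrix.trace_diagonal]

lemma fsq_eq_sum_sq (M : Matrix (Fin a) (Fin b) ℝ) :
    fsq M = ∑ i, ∑ t, (M i t) ^ 2 := by
  unfold fsq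
  rw [Matrix.trace]
  rw [Finset.sum_comm]
  apply Finset.sum_congr rfl
  intro i _
  simp [Matrix.diag, Matrix.mul_apply, Matrix.conjTranspose_apply, pow_two]

lemma fsq_nonneg (M : Matrix (Fin a) (Fin b) ℝ) : 0 ≤ fsq M := by
  rw [fsq_eq_sum_sq]
  positivity

/-- number of nonzero eigenvalues equals the rank -/
lemma card_ev_ne_eq_rank (M : Matrix (Fin a) (Fin b) ℝ) :
    (Finset.univ.filter fun j => ev M j ≠ 0).card = M.rank := by
  have h := (hermT M).rank_eq_card_non_zero_eigs
  rw [Matrix.rank_transpose_mul_self] at h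
  rw [h, Fintype.card_subtype]
  rfl

lemma N_le_sqrt_rank_mul (M : Matrix (Fin a) (Fin b) ℝ) :
    N M ≤ Real.sqrt (M.rank) * Real.sqrt (fsq M) := by
  have key : (N M) ^ 2 ≤ (M.rank : ℝ) * fsq M := by
    have hcs := Finset.sum_sq_le_sum_mul_sum_of_sq_eq_mul (Finset.univ : Finset (Fin b))
      (f := fun j => if ev M j = 0 then 0 else 1) (g := fun j => ev M j)
      (r := fun j => Real.sqrt (ev M j))
      (fun j _ => by positivity) (fun j _ => ev_nonneg M j)
      (fun j _ => by
        by_cases h : ev M j = 0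
        · simp [h]
        · simp [h, Real.sq_sqrt (ev_nonneg M j)])
    have h1 : ∑ j, (if ev M j = 0 then (0:ℝ) else 1) = (M.rank : ℝ) := by
      rw [← card_ev_ne_eq_rank M]
      rw [Finset.sum_ite, Finset.sum_const, Finset.sum_const]
      simp [Finset.filter_ne']
    calc (N M) ^ 2 ≤ (∑ j, if ev M j = 0 then (0:ℝ) else 1) * ∑ j, ev M j := hcs
      _ = (M.rank : ℝ) * fsq M := by rw [h1, fsq_eq_sum_ev]
  calc N M = Real.sqrt ((N M) ^ 2) := (Real.sqrt_sq (N_nonneg M)).symm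
    _ ≤ Real.sqrt ((M.rank : ℝ) * fsq M) := Real.sqrt_le_sqrt key
    _ = Real.sqrt (M.rank) * Real.sqrt (fsq M) := Real.sqrt_mul (Nat.cast_nonneg _) _

lemma rank_add_le (X Y : Matrix (Fin a) (Fin b) ℝ) : (X + Y).rank ≤ X.rank + Y.rank := by
  have hle : LinearMap.range (X + Y).mulVecLin
      ≤ LinearMap.range X.mulVecLin ⊔ LinearMap.range Y.mulVecLin := by
    rintro v ⟨x, rfl⟩
    rw [Matrix.mulVecLin_add]
    exact Submodule.add_mem_sup (LinearMap.mem_range_self _ x) (LinearMap.mem_range_self _ x)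
  calc (X + Y).rank
      = Module.finrank ℝ (LinearMap.range (X + Y).mulVecLin) := rfl
    _ ≤ Module.finrank ℝ
        ↥(LinearMap.range X.mulVecLin ⊔ LinearMap.range Y.mulVecLin) :=
        Submodule.finrank_mono hle
    _ ≤ Module.finrank ℝ (LinearMap.range X.mulVecLin)
        + Module.finrank ℝ (LinearMap.range Y.mulVecLin) :=
        Submodule.finrank_add_le_finrank_add_finrank _ _
    _ = X.rank + Y.rank := rfl

lemma rank_Q_le (A : Matrix (Fin a) (Fin b) ℝ) : (Q A).rank ≤ A.rank := by
  unfold Q conj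
  calc (V A * Matrix.diagonal (fun j => if ev A j = 0 then (0:ℝ) else 1) * (V A)ᴴ).rank
      ≤ (V A * Matrix.diagonal (fun j => if ev A j = 0 then (0:ℝ) else 1)).rank :=
        Matrix.rank_mul_le_left _ _
    _ ≤ (Matrix.diagonal (fun j => if ev A j = 0 then (0:ℝ) else 1)).rank :=
        Matrix.rank_mul_le_right _ _
    _ = Fintype.card {j // (if ev A j = 0 then (0:ℝ) else 1) ≠ 0} := Matrix.rank_diagonal _
    _ = Fintype.card {j // ev A j ≠ 0} := by
        apply Fintype.card_congr
        apply Equiv.subtypeEquivRight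
        intro j
        by_cases h : ev A j = 0 <;> simp [h]
    _ = A.rank := by
        have h := (hermT A).rank_eq_card_non_zero_eigs
        rw [Matrix.rank_transpose_mul_self] at h
        exact h.symm

lemma nuclearNorm_eq_N {n T : ℕ} (A : Matrix (Fin n) (Fin T) ℝ) : nuclearNorm A = N A := rfl

lemma frobeniusNorm_eq {n T : ℕ} (A : Matrix (Fin n) (Fin T) ℝ) :
    frobeniusNorm A = Real.sqrt (fsq A) := by
  rw [frobeniusNorm, fsq_eq_sum_sq]

end NucAux

lemma split_lemma {a b : ℕ} (P' : Matrix (Fin a) (Fin a) ℝ) (Q' : Matrix (Fin b) (Fin b) ℝ)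
    (Δ' : Matrix (Fin a) (Fin b) ℝ) :
    Δ' - (1 - P') * Δ' * (1 - Q') = P' * Δ' + (1 - P') * (Δ' * Q') := by
  simp only [Matrix.sub_mul, Matrix.mul_sub, Matrix.one_mul, Matrix.mul_one, Matrix.mul_assoc]
  abel

lemma proj_sq_lemma {a : ℕ} (P' : Matrix (Fin a) (Fin a) ℝ) (h : P' * P' = P') :
    (1 - P') * (1 - P') = 1 - P' := by
  rw [Matrix.mul_sub, Matrix.mul_one, Matrix.sub_mul, Matrix.one_mul, h]
  abel

set_option maxHeartbeats 1000000 in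
open NucAux in
/-- for any `Π̌, Π̃ ∈ ℝ^{n×T}`,
`‖Π̌ − Π̃‖_* + ‖Π̌‖_* − ‖Π̃‖_* ≤ 6·√(rank Π̌)·‖Π̌ − Π̃‖_F`. -/
theorem nuclearNorm_difference_bound {n T : ℕ}
    (Pc Pt : Matrix (Fin n) (Fin T) ℝ) :
    nuclearNorm (Pc - Pt) + nuclearNorm Pc - nuclearNorm Pt ≤
      6 * Real.sqrt (Pc.rank) * frobeniusNorm (Pc - Pt) := by
  set Δ := Pc - Pt with hΔ
  set A := Pc with hA
  clear_value Δ A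
  set P := Q Aᴴ with hP
  set QA := Q A with hQA
  clear_value P QA
  set G := (1 - P) * Δ * (1 - QA) with hG
  set D := Δ - G with hD
  clear_value G D
  -- basic projection facts
  have hPA : P * A = A := by
    rw [hP]
    have h := mul_Q Aᴴ
    have := congrArg Matrix.conjTranspose h
    rwa [Matrix.conjTranspose_mul, Q_herm, Matrix.conjTranspose_conjTranspose] at this
  have hAQ : A * QA = A := by rw [hQA]; exact mul_Q A
  have h1 : Aᴴ * G = 0 := by
    have hAP : Aᴴ * (1 - P) = 0 := by
      have : Aᴴ * P = Aᴴ := by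
        calc Aᴴ * P = Aᴴ * Pᴴ := by rw [hP, Q_herm]
          _ = (P * A)ᴴ := by rw [Matrix.conjTranspose_mul]
          _ = Aᴴ := by rw [hPA]
      rw [Matrix.mul_sub, Matrix.mul_one, this, sub_self]
    calc Aᴴ * G = (Aᴴ * (1 - P)) * (Δ * (1 - QA)) := by
          rw [hG]; simp only [Matrix.mul_assoc]
      _ = 0 := by rw [hAP, Matrix.zero_mul]
  have h2 : G * Aᴴ = 0 := by
    have hQAh : (1 - QA) * Aᴴ = 0 := by
      have : QA * Aᴴ = Aᴴ := by
        calc QA * Aᴴ = QAᴴ * Aᴴ := by rw [hQA, Q_herm]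
          _ = (A * QA)ᴴ := by rw [Matrix.conjTranspose_mul]
          _ = Aᴴ := by rw [hAQ]
      rw [Matrix.sub_mul, Matrix.one_mul, this, sub_self]
    calc G * Aᴴ = ((1 - P) * Δ) * ((1 - QA) * Aᴴ) := by
          rw [hG]; simp only [Matrix.mul_assoc]
      _ = 0 := by rw [hQAh, Matrix.mul_zero]
  -- nuclear norm chain
  have hNsup : N A + N G ≤ N (A - G) := by
    have h := N_superadd A (-G) (by rw [Matrix.mul_neg, h1, neg_zero])
      (by rw [Matrix.neg_mul, h2, neg_zero])
    rwa [N_neg, ← sub_eq_add_neg] at h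
  have hAD : A - Δ = Pt := by rw [hΔ]; abel
  have htri1 : N (A - G) ≤ N Pt + N D := by
    have e : A - G = (A - Δ) + D := by rw [hD]; abel
    rw [e, hAD]
    exact N_add_le _ _
  have htri2 : N Δ ≤ N D + N G := by
    have e : Δ = D + G := by rw [hD]; abel
    calc N Δ = N (D + G) := by rw [← e]
      _ ≤ N D + N G := N_add_le _ _
  have key1 : N Δ + N A - N Pt ≤ 2 * N D := by linarith
  -- rank bound
  have hDsplit : D = P * Δ + (1 - P) * (Δ * QA) := by
    rw [hD, hG]; exact split_lemma P QA Δ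
  have hrankD : D.rank ≤ 2 * A.rank := by
    rw [hDsplit]
    calc (P * Δ + (1 - P) * (Δ * QA)).rank
        ≤ (P * Δ).rank + ((1 - P) * (Δ * QA)).rank := rank_add_le _ _
      _ ≤ A.rank + A.rank := by
          apply add_le_add
          · calc (P * Δ).rank ≤ P.rank := Matrix.rank_mul_le_left _ _
              _ ≤ Aᴴ.rank := by rw [hP]; exact rank_Q_le Aᴴ
              _ = A.rank := Matrix.rank_conjTranspose A
          · calc ((1 - P) * (Δ * QA)).rank ≤ (Δ * QA).rank := Matrix.rank_mul_le_right _ _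
              _ ≤ QA.rank := Matrix.rank_mul_le_right _ _
              _ ≤ A.rank := by rw [hQA]; exact rank_Q_le A
      _ = 2 * A.rank := by ring
  -- Frobenius bound
  have hPP : P * P = P := by rw [hP]; exact Q_idem Aᴴ
  have hQQ : QA * QA = QA := by rw [hQA]; exact Q_idem A
  have hPid : (1 - P) * (1 - P) = 1 - P := proj_sq_lemma P hPP
  have hQid : (1 - QA) * (1 - QA) = 1 - QA := proj_sq_lemma QA hQQ
  have hPherm : (1 - P)ᴴ = 1 - P := by
    rw [Matrix.conjTranspose_sub, Matrix.conjTranspose_one, hP, Q_herm]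
  have hQherm : (1 - QA)ᴴ = 1 - QA := by
    rw [Matrix.conjTranspose_sub, Matrix.conjTranspose_one, hQA, Q_herm]
  have hGh : Gᴴ = (1 - QA) * (Δᴴ * (1 - P)) := by
    rw [hG, Matrix.conjTranspose_mul, Matrix.conjTranspose_mul, hPherm, hQherm]
  have hGQ : G * (1 - QA) = G := by
    calc G * (1 - QA) = ((1 - P) * Δ) * ((1 - QA) * (1 - QA)) := by
          rw [hG]; simp only [Matrix.mul_assoc]
      _ = G := by rw [hQid, hG]
  have hPG : (1 - P) * G = G := by
    calc (1 - P) * G = ((1 - P) * (1 - P)) * (Δ * (1 - QA)) := by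
          rw [hG]; simp only [Matrix.mul_assoc]
      _ = G := by rw [hPid, hG, Matrix.mul_assoc]
  have hGG : Matrix.trace (Gᴴ * G) = Matrix.trace (Δᴴ * G) := by
    calc Matrix.trace (Gᴴ * G)
        = Matrix.trace ((1 - QA) * (Δᴴ * ((1 - P) * G))) := by
          rw [hGh]; simp only [Matrix.mul_assoc]
      _ = Matrix.trace ((1 - QA) * (Δᴴ * G)) := by rw [hPG]
      _ = Matrix.trace ((Δᴴ * G) * (1 - QA)) := Matrix.trace_mul_comm _ _
      _ = Matrix.trace (Δᴴ * (G * (1 - QA))) := by rw [Matrix.mul_assoc]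
      _ = Matrix.trace (Δᴴ * G) := by rw [hGQ]
  have hGΔ : Matrix.trace (Gᴴ * Δ) = Matrix.trace (Δᴴ * G) := by
    have e : Gᴴ * Δ = (Δᴴ * G)ᴴ := by
      simp [Matrix.conjTranspose_mul]
    rw [e, Matrix.trace_conjTranspose, star_trivial]
  have hfsqD : fsq D = fsq Δ - fsq G := by
    have expand : Dᴴ * D = Δᴴ * Δ - Δᴴ * G - (Gᴴ * Δ - Gᴴ * G) := by
      rw [hD]
      simp only [Matrix.conjTranspose_sub, Matrix.sub_mul, Matrix.mul_sub]
      abel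
    have : Matrix.trace (Dᴴ * D)
        = Matrix.trace (Δᴴ * Δ) - Matrix.trace (Δᴴ * G)
          - (Matrix.trace (Gᴴ * Δ) - Matrix.trace (Gᴴ * G)) := by
      rw [expand, Matrix.trace_sub, Matrix.trace_sub, Matrix.trace_sub]
    unfold fsq
    rw [this, hGΔ, hGG]
    ring
  have hfsq_le : fsq D ≤ fsq Δ := by
    rw [hfsqD]; linarith [fsq_nonneg G]
  -- final numeric assembly
  have hND : N D ≤ Real.sqrt (D.rank) * Real.sqrt (fsq D) := N_le_sqrt_rank_mul D
  have s1 : Real.sqrt ((D.rank : ℝ)) ≤ Real.sqrt 2 * Real.sqrt (A.rank) := by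
    rw [← Real.sqrt_mul (by norm_num : (0:ℝ) ≤ 2)]
    apply Real.sqrt_le_sqrt
    exact_mod_cast hrankD
  have s2 : Real.sqrt (fsq D) ≤ Real.sqrt (fsq Δ) := Real.sqrt_le_sqrt hfsq_le
  have hsqrt2 : Real.sqrt 2 ≤ 3 := by
    calc Real.sqrt 2 ≤ Real.sqrt 9 := Real.sqrt_le_sqrt (by norm_num)
      _ = 3 := by rw [show (9:ℝ) = 3 ^ 2 by norm_num, Real.sqrt_sq (by norm_num : (0:ℝ) ≤ 3)]
  rw [nuclearNorm_eq_N, nuclearNorm_eq_N, nuclearNorm_eq_N, frobeniusNorm_eq]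
  calc N Δ + N A - N Pt ≤ 2 * N D := key1
    _ ≤ 2 * (Real.sqrt (D.rank) * Real.sqrt (fsq D)) := by linarith
    _ ≤ 2 * ((Real.sqrt 2 * Real.sqrt (A.rank)) * Real.sqrt (fsq Δ)) := by
        gcongr
    _ ≤ 6 * Real.sqrt (A.rank) * Real.sqrt (fsq Δ) := by
        nlinarith [Real.sqrt_nonneg ((A.rank : ℝ)), Real.sqrt_nonneg (fsq Δ), hsqrt2,
          mul_nonneg (Real.sqrt_nonneg ((A.rank : ℝ))) (Real.sqrt_nonneg (fsq Δ))]
end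

section
/- Let δ ∈ ℝᵖ, let T ⊆ {1,…,p}, and for m ≥ 1 let T̄(δ,m) ⊆ Tᶜ be the set of indices of the m largest coordinates of |δ| among indices outside T (with T̄(δ,m) = Tᶜ if |Tᶜ| ≤ m). Then ‖δ_{(T ∪ T̄(δ,m))ᶜ}‖₂² ≤ ‖δ_{Tᶜ}‖₁² / m. -/
open scoped BigOperators

/-- let `δ ∈ ℝᵖ`, `T ⊆ {1,…,p}`, `m ≥ 1`, and let `S ⊆ Tᶜ` be a set
of indices of the `m` largest coordinates of `|δ|` outside `T` (i.e.
`S.card = min m |Tᶜ|` and every coordinate of `|δ|` in `S` dominates every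
coordinate of `|δ|` in `Tᶜ \ S`).  Then
`‖δ_{(T ∪ S)ᶜ}‖₂² ≤ ‖δ_{Tᶜ}‖₁² / m`. -/
theorem sparse_tail_bound {p : ℕ} (δ : Fin p → ℝ) (T : Finset (Fin p))
    (m : ℕ) (hm : 1 ≤ m) (S : Finset (Fin p)) (hST : S ⊆ Tᶜ)
    (hcard : S.card = min m Tᶜ.card)
    (hlargest : ∀ i ∈ S, ∀ j ∈ Tᶜ \ S, |δ j| ≤ |δ i|) :
    ∑ i ∈ (T ∪ S)ᶜ, (δ i) ^ 2 ≤ (∑ i ∈ Tᶜ, |δ i|) ^ 2 / m := by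
  have hR : (T ∪ S)ᶜ = Tᶜ \ S := by
    ext i
    simp only [Finset.mem_compl, Finset.mem_union, Finset.mem_sdiff, not_or]
  set L := ∑ i ∈ Tᶜ, |δ i| with hL
  have hL0 : 0 ≤ L := Finset.sum_nonneg fun i _ => abs_nonneg _
  rcases le_or_gt Tᶜ.card m with h | h
  · have hS : S = Tᶜ := by
      apply Finset.eq_of_subset_of_card_le hST
      rw [hcard, min_eq_right h]
    rw [hR, hS, Finset.sdiff_self]
    simp only [Finset.sum_empty]
    positivity
  · have hSm : S.card = m := by rw [hcard, min_eq_left h.le]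
    have hm0 : (0 : ℝ) < m := by exact_mod_cast hm
    have key : ∀ j ∈ Tᶜ \ S, |δ j| ≤ L / m := by
      intro j hj
      rw [le_div_iff₀ hm0]
      calc |δ j| * m = ∑ _i ∈ S, |δ j| := by rw [Finset.sum_const, hSm]; ring
        _ ≤ ∑ i ∈ S, |δ i| := Finset.sum_le_sum fun i hi => hlargest i hi j hj
        _ ≤ L := Finset.sum_le_sum_of_subset_of_nonneg hST fun i _ _ => abs_nonneg _
    rw [hR]
    calc ∑ i ∈ Tᶜ \ S, δ i ^ 2 ≤ ∑ i ∈ Tᶜ \ S, (L / m) * |δ i| := by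
          apply Finset.sum_le_sum
          intro i hi
          have h1 : δ i ^ 2 = |δ i| * |δ i| := by rw [abs_mul_abs_self]; ring
          rw [h1]
          exact mul_le_mul_of_nonneg_right (key i hi) (abs_nonneg _)
      _ = (L / m) * ∑ i ∈ Tᶜ \ S, |δ i| := by rw [Finset.mul_sum]
      _ ≤ (L / m) * L := by
          apply mul_le_mul_of_nonneg_left _ (by positivity)
          exact Finset.sum_le_sum_of_subset_of_nonneg Finset.sdiff_subset
            fun i _ _ => abs_nonneg _
      _ = L ^ 2 / m := by ring
end
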